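/- Suppose a group G has an infinite virtually cyclic normal subgroup V₁ with infinite virtually cyclic quotient G/V₁. Then G contains a free abelian normal subgroup of rank 2 of finite index. -/

import Mathlib

open Subgroup

/-- A group is virtually cyclic if it has a cyclic subgroup of finite index. -/
def VirtuallyCyclic (G : Type*) [Group G] : Prop :=
  ∃ H : Subgroup G, IsCyclic H ∧ H.FiniteIndex

section Aux

variable {G : Type*} [Group G]

lemma aux_finite_of_finiteIndex (H : Subgroup G) (hi : H.index ≠ 0) (hf : Finite H) :
    Finite G := by
  have h := H.card_mul_index
  have h1 : Nat.card H ≠ 0 := Nat.card_pos.ne'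
  refine Nat.finite_of_card_ne_zero ?_
  rw [← h]
  exact mul_ne_zero h1 hi

lemma aux_isCyclic_zpowers (z : G) : IsCyclic ↥(zpowers z) := by
  refine ⟨⟨⟨z, mem_zpowers z⟩, fun x => ?_⟩⟩
  obtain ⟨k, hk⟩ := mem_zpowers_iff.mp x.2
  exact mem_zpowers_iff.mpr ⟨k, by ext; simpa using hk⟩

lemma aux_eq_zpowers_coe {K : Subgroup G} (g : ↥K) (hg : ∀ x : ↥K, x ∈ zpowers g) :
    K = zpowers (g : G) := by
  apply le_antisymm
  · intro x hx
    obtain ⟨k, hk⟩ := mem_zpowers_iff.mp (hg ⟨x, hx⟩)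
    exact mem_zpowers_iff.mpr ⟨k, by simpa using congrArg (Subtype.val) hk⟩
  · exact zpowers_le.mpr g.2

lemma aux_exists_gen (G : Type*) [Group G] [Infinite G] (h : VirtuallyCyclic G) :
    ∃ z : G, ¬ IsOfFinOrder z ∧ (Subgroup.zpowers z).FiniteIndex := by
  obtain ⟨H, hc, hfi⟩ := h
  obtain ⟨g, hg⟩ := hc.exists_generator
  have hHz : H = zpowers (g : G) := aux_eq_zpowers_coe g hg
  refine ⟨(g : G), ?_, hHz ▸ hfi⟩
  intro hford
  have hford' : IsOfFinOrder g := by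
    have := orderOf_injective H.subtype Subtype.coe_injective g
    rw [← orderOf_pos_iff] at hford ⊢
    simpa [this] using hford
  have hfin : Finite ↥(zpowers g) := hford'.finite_zpowers
  have htop : zpowers g = (⊤ : Subgroup ↥H) := by
    ext x; simp [hg x]
  rw [htop] at hfin
  have : Finite ↥H := Finite.of_equiv _ Subgroup.topEquiv.toEquiv
  exact not_finite_iff_infinite.mpr ‹Infinite G› (aux_finite_of_finiteIndex H hfi.index_ne_zero this)

end Aux
section Aux2
variable {G : Type*} [Group G]
open Subgroup

lemma aux_relindex_pow (z : G) (e : ℕ) (he : e ≠ 0) :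
    (zpowers (z ^ e)).relIndex (zpowers z) ≠ 0 := by
  have hepos : (0 : ℤ) < (e : ℤ) := by exact_mod_cast Nat.pos_of_ne_zero he
  have hfin : Finite (↥(zpowers z) ⧸ ((zpowers (z ^ e)).subgroupOf (zpowers z))) := by
    refine Finite.of_surjective
      (fun i : Fin e =>
        (QuotientGroup.mk ⟨z ^ ((i : ℕ) : ℤ), zpow_mem_zpowers z _⟩ :
          ↥(zpowers z) ⧸ ((zpowers (z ^ e)).subgroupOf (zpowers z)))) ?_
    intro x
    induction x using QuotientGroup.induction_on with
    | H a =>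
      obtain ⟨k, hk⟩ := mem_zpowers_iff.mp a.2
      have h0 : 0 ≤ k % (e : ℤ) := Int.emod_nonneg k (by exact_mod_cast he)
      have hlt : k % (e : ℤ) < (e : ℤ) := Int.emod_lt_of_pos k hepos
      set i : Fin e := ⟨(k % (e : ℤ)).toNat, by omega⟩ with hidef
      have hival : ((i : ℕ) : ℤ) = k % (e : ℤ) := by
        rw [hidef]; simp [Int.toNat_of_nonneg h0]
      refine ⟨i, ?_⟩
      rw [QuotientGroup.eq, mem_subgroupOf]
      have hval :
          (((⟨z ^ ((i : ℕ) : ℤ), zpow_mem_zpowers z _⟩ : ↥(zpowers z))⁻¹ * a :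
            ↥(zpowers z)) : G) = z ^ (k - k % (e : ℤ)) := by
        simp only [Subgroup.coe_mul, Subgroup.coe_inv]
        rw [← hk, hival, ← zpow_neg, ← zpow_add]
        ring_nf
      refine mem_zpowers_iff.mpr ⟨k / (e : ℤ), ?_⟩
      have hpow : (z ^ e : G) ^ (k / (e : ℤ)) = z ^ (k - k % (e : ℤ)) := by
        rw [← zpow_natCast z e, ← zpow_mul]
        congr 1
        have := Int.mul_ediv_add_emod k (e : ℤ)
        omega
      rw [hpow]
      exact hval.symm
  exact Subgroup.index_ne_zero_of_finite

end Aux2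
section Aux3
variable {G : Type*} [Group G]
open Subgroup

/-- In a group, a finite-index subgroup admits a uniform exponent: some positive power of
every element lies in it. -/
lemma aux_exists_uniform_pow (H : Subgroup G) (hH : H.FiniteIndex) :
    ∃ e : ℕ, e ≠ 0 ∧ ∀ w : G, w ^ e ∈ H := by
  haveI := hH
  refine ⟨H.normalCore.index, Subgroup.FiniteIndex.index_ne_zero, fun w => ?_⟩
  exact H.normalCore_le (H.normalCore.pow_index_mem w)

lemma aux_infinite_zpowers {z : G} (hz : ¬ IsOfFinOrder z) : Infinite ↥(zpowers z) := by
  have hinj := injective_zpow_iff_not_isOfFinOrder.mpr hz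
  exact Infinite.of_injective (fun n : ℤ => (⟨z ^ n, zpow_mem_zpowers z n⟩ : ↥(zpowers z)))
    (fun a b hab => hinj (by simpa [Subtype.ext_iff] using hab))

/-- An infinite cyclic group has finite automorphism group. -/
lemma aux_finite_mulAut (Y : Type*) [Group Y] (y : Y) (hy : ∀ x : Y, x ∈ zpowers y)
    (hford : ¬ IsOfFinOrder y) : Finite (MulAut Y) := by
  have hinj := injective_zpow_iff_not_isOfFinOrder.mpr hford
  have key : ∀ φ : MulAut Y, φ y = y ∨ φ y = y⁻¹ := by
    intro φ
    obtain ⟨c, hc⟩ := mem_zpowers_iff.mp (hy (φ y))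
    obtain ⟨k, hk⟩ := mem_zpowers_iff.mp (hy (φ.symm y))
    have : y ^ (c * k) = y ^ (1 : ℤ) := by
      rw [zpow_one, zpow_mul, hc, ← map_zpow, hk, MulEquiv.apply_symm_apply]
    have hck : c * k = 1 := hinj this
    rcases Int.isUnit_iff.mp ((⟨⟨c, k, hck, by rw [mul_comm]; exact hck⟩, rfl⟩ : IsUnit c)) with h1 | h1
    · left; rw [← hc, h1, zpow_one]
    · right; rw [← hc, h1, zpow_neg, zpow_one]
  have ext_of_gen : ∀ φ ψ : MulAut Y, φ y = ψ y → φ = ψ := by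
    intro φ ψ h
    ext x
    obtain ⟨n, hn⟩ := mem_zpowers_iff.mp (hy x)
    rw [← hn, map_zpow, map_zpow, h]
  refine Finite.of_injective (fun φ : MulAut Y => (φ y = y : Prop)) ?_
  intro φ ψ h
  have h' : (φ y = y) = (ψ y = y) := h
  have hiff : (φ y = y) ↔ (ψ y = y) := by rw [h']
  by_cases hφ : φ y = y
  · exact ext_of_gen φ ψ (hφ.trans (hiff.mp hφ).symm)
  · have hψ : ¬ ψ y = y := fun hc => hφ (hiff.mpr hc)
    rcases key φ with h1 | h1
    · exact absurd h1 hφ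
    rcases key ψ with h2 | h2
    · exact absurd h2 hψ
    exact ext_of_gen φ ψ (h1.trans h2.symm)

end Aux3
section Aux4
open Subgroup

lemma aux_zz (B : Subgroup (Multiplicative (ℤ × ℤ))) (hB : B.FiniteIndex) :
    Nonempty (↥B ≃* Multiplicative (ℤ × ℤ)) := by
  classical
  have hm0 : B.index ≠ 0 := hB.index_ne_zero
  -- the corresponding submodule of ℤ × ℤ
  let S : Submodule ℤ (ℤ × ℤ) :=
    { carrier := {v | Multiplicative.ofAdd v ∈ B}
      add_mem' := fun {a b} ha hb => by
        show Multiplicative.ofAdd (a + b) ∈ B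
        rw [ofAdd_add]; exact B.mul_mem ha hb
      zero_mem' := by show Multiplicative.ofAdd 0 ∈ B; rw [ofAdd_zero]; exact B.one_mem
      smul_mem' := fun c x hx => by
        show Multiplicative.ofAdd (c • x) ∈ B
        rw [ofAdd_zsmul]; exact B.zpow_mem hx c }
  have hSmem : ∀ v : ℤ × ℤ, v ∈ S ↔ Multiplicative.ofAdd v ∈ B := fun _ => Iff.rfl
  -- two independent vectors in S
  have hpow : ∀ v : ℤ × ℤ, (B.index : ℤ) • v ∈ S := by
    intro v
    have := B.pow_index_mem (Multiplicative.ofAdd v)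
    rw [hSmem, ← zpow_natCast] at *
    rwa [ofAdd_zsmul]
  set m : ℤ := (B.index : ℤ) with hmdef
  have hmz : m ≠ 0 := by rw [hmdef]; exact_mod_cast hm0
  have hv1 : ((m, 0) : ℤ × ℤ) ∈ S := by
    have := hpow (1, 0); simpa using this
  have hv2 : ((0, m) : ℤ × ℤ) ∈ S := by
    have := hpow (0, 1); simpa using this
  have hli : LinearIndependent ℤ ![((m, 0) : ℤ × ℤ), ((0, m) : ℤ × ℤ)] := by
    rw [Fintype.linearIndependent_iff]
    intro g hg
    have h0 : g 0 * m = 0 ∧ g 1 * m = 0 := by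
      have h1 := congrArg Prod.fst hg
      have h2 := congrArg Prod.snd hg
      constructor
      · simpa [Fin.sum_univ_two] using h1
      · simpa [Fin.sum_univ_two] using h2
    intro i
    fin_cases i
    · exact (mul_eq_zero.mp h0.1).resolve_right hmz
    · exact (mul_eq_zero.mp h0.2).resolve_right hmz
  have hliS : LinearIndependent ℤ
      ![(⟨(m, 0), hv1⟩ : ↥S), (⟨(0, m), hv2⟩ : ↥S)] := by
    have hcomp : (S.subtype) ∘ ![(⟨(m, 0), hv1⟩ : ↥S), (⟨(0, m), hv2⟩ : ↥S)]
        = ![((m, 0) : ℤ × ℤ), ((0, m) : ℤ × ℤ)] := by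
      funext i; fin_cases i <;> rfl
    exact LinearIndependent.of_comp S.subtype (by rwa [hcomp])
  -- basis of S via PID theory
  obtain ⟨n, bS⟩ := Submodule.basisOfPid (Module.Basis.finTwoProd ℤ) S
  haveI : Module.Finite ℤ ↥S := Module.Finite.of_basis bS
  have hfr : Module.finrank ℤ ↥S = n := by
    rw [Module.finrank_eq_card_basis bS, Fintype.card_fin]
  have hup : Module.finrank ℤ ↥S ≤ 2 := by
    have := S.finrank_le
    simpa [Module.finrank_self] using this
  have hlo : 2 ≤ Module.finrank ℤ ↥S := by
    have := hliS.fintype_card_le_finrank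
    simpa using this
  have hn2 : n = 2 := by omega
  subst hn2
  -- linear equivalence S ≃ ℤ × ℤ
  let eS : ↥S ≃ₗ[ℤ] ℤ × ℤ := bS.equiv (Module.Basis.finTwoProd ℤ) (Equiv.refl _)
  -- multiplicative glue
  let e0 : ↥B ≃* Multiplicative ↥S :=
    { toFun := fun b => Multiplicative.ofAdd (⟨(b : Multiplicative (ℤ × ℤ)).toAdd, b.2⟩ : ↥S)
      invFun := fun v => ⟨Multiplicative.ofAdd ((v.toAdd : ℤ × ℤ)), v.toAdd.2⟩
      left_inv := fun b => rfl
      right_inv := fun v => rfl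
      map_mul' := fun a b => rfl }
  exact ⟨e0.trans (AddEquiv.toMultiplicative eS.toAddEquiv)⟩

end Aux4
section Aux5
variable {G : Type*} [Group G]
open Subgroup

lemma aux_ford_coe {K : Subgroup G} (x : ↥K) :
    IsOfFinOrder (x : G) ↔ IsOfFinOrder x := by
  rw [← orderOf_pos_iff, ← orderOf_pos_iff, Subgroup.orderOf_coe]

lemma aux_transfer (A N : Subgroup G) (hNA : N ≤ A)
    [hN : N.Normal] [hNfi : N.FiniteIndex]
    (e : Multiplicative (ℤ × ℤ) ≃* ↥A) :
    Nonempty (↥N ≃* Multiplicative (ℤ × ℤ)) := by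
  let B : Subgroup (Multiplicative (ℤ × ℤ)) := (N.subgroupOf A).comap e.toMonoidHom
  have hBfi : B.FiniteIndex := by
    constructor
    have h1 : B.index = (N.subgroupOf A).index :=
      Subgroup.index_comap_of_surjective _ e.surjective
    rw [h1]
    intro h0
    have h2 : N.relIndex A ∣ N.index := Subgroup.relIndex_dvd_index_of_normal N A
    have h3 : N.relIndex A = 0 := h0
    rw [h3] at h2
    exact hNfi.index_ne_zero (zero_dvd_iff.mp h2)
  obtain ⟨eB⟩ := aux_zz B hBfi
  have hmap : B.map e.toMonoidHom = N.subgroupOf A :=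
    Subgroup.map_comap_eq_self_of_surjective e.surjective _
  exact ⟨(((Subgroup.subgroupOfEquivOfLe hNA).symm.trans
    (MulEquiv.subgroupCongr hmap).symm).trans
    (MulEquiv.subgroupMap e B).symm).trans eB⟩

end Aux5
/-- If `G` has an infinite virtually cyclic normal subgroup `V₁` with
infinite virtually cyclic quotient `G ⧸ V₁`, then `G` contains a free abelian normal
subgroup of rank 2 (i.e. isomorphic to `ℤ × ℤ`) of finite index. -/
theorem exists_rank_two_free_abelian_normal_of_finiteIndex
    (G : Type*) [Group G] (V₁ : Subgroup G) [V₁.Normal]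
    (h₁ : VirtuallyCyclic V₁) (h₁' : Infinite V₁)
    (h₂ : VirtuallyCyclic (G ⧸ V₁)) (h₂' : Infinite (G ⧸ V₁)) :
    ∃ N : Subgroup G, N.Normal ∧ N.FiniteIndex ∧
      Nonempty (N ≃* Multiplicative (ℤ × ℤ)) := by
  classical
  -- Step 1: an infinite-order element z of V₁ generating a finite-index subgroup of V₁
  obtain ⟨z', hz'ford, hz'fi⟩ := aux_exists_gen ↥V₁ h₁
  set z : G := (z' : G) with hzdef
  have hzV₁ : z ∈ V₁ := z'.2
  have hzford : ¬ IsOfFinOrder z := fun h => hz'ford ((aux_ford_coe z').mp h)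
  have hZsub : (zpowers z).subgroupOf V₁ = zpowers z' := by
    ext x
    simp only [mem_subgroupOf, mem_zpowers_iff, Subtype.ext_iff]
    constructor
    · rintro ⟨k, hk⟩; exact ⟨k, by simpa using hk⟩
    · rintro ⟨k, hk⟩; exact ⟨k, by simpa using hk⟩
  have hZrel : (zpowers z).relIndex V₁ ≠ 0 := by
    show ((zpowers z).subgroupOf V₁).index ≠ 0
    rw [hZsub]; exact hz'fi.index_ne_zero
  -- Step 2: uniform exponent
  obtain ⟨e, he0, hepow⟩ := aux_exists_uniform_pow ((zpowers z).subgroupOf V₁)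
    (by rw [hZsub]; exact hz'fi)
  have hkey : ∀ w : G, w ∈ V₁ → w ^ e ∈ zpowers z := by
    intro w hw
    have := hepow ⟨w, hw⟩
    rw [mem_subgroupOf] at this
    simpa using this
  set z₀ : G := z ^ e with hz₀def
  have hz₀V₁ : z₀ ∈ V₁ := V₁.pow_mem hzV₁ e
  have hzinj := injective_zpow_iff_not_isOfFinOrder.mpr hzford
  have hz₀ford : ¬ IsOfFinOrder z₀ := by
    rw [← injective_zpow_iff_not_isOfFinOrder]
    intro a b hab
    simp only at hab
    have : z ^ ((e : ℤ) * a) = z ^ ((e : ℤ) * b) := by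
      rw [zpow_mul, zpow_mul, zpow_natCast]
      exact hab
    have := hzinj this
    have he0' : (e : ℤ) ≠ 0 := by exact_mod_cast he0
    exact mul_left_cancel₀ he0' this
  -- Step 3: Y = normal core of <z>
  set Y : Subgroup G := (zpowers z).normalCore with hYdef
  have hz₀Y : z₀ ∈ Y := by
    intro b
    have hconj : b * z₀ * b⁻¹ = (b * z * b⁻¹) ^ e := by
      rw [conj_pow]
    rw [hconj]
    exact hkey _ (‹V₁.Normal›.conj_mem z hzV₁ b)
  have hYle : Y ≤ zpowers z := normalCore_le _
  have hYV₁ : Y ≤ V₁ := hYle.trans (zpowers_le.mpr hzV₁)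
  haveI hYnormal : Y.Normal := normalCore_normal _
  haveI : IsCyclic ↥(zpowers z) := aux_isCyclic_zpowers z
  haveI : IsCyclic ↥Y := Subgroup.isCyclic_of_le hYle
  obtain ⟨yH, hyH⟩ := IsCyclic.exists_generator (α := ↥Y)
  haveI hYinf : Infinite ↥Y := by
    refine Infinite.of_injective (fun n : ℤ => (⟨z₀ ^ n, Y.zpow_mem hz₀Y n⟩ : ↥Y)) ?_
    intro a b hab
    exact injective_zpow_iff_not_isOfFinOrder.mpr hz₀ford
      (by simpa [Subtype.ext_iff] using hab)
  have hyford : ¬ IsOfFinOrder yH := by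
    intro h
    have hfin : Finite ↥(zpowers yH) := h.finite_zpowers
    have htop : zpowers yH = (⊤ : Subgroup ↥Y) := by ext x; simp [hyH x]
    rw [htop] at hfin
    exact not_finite_iff_infinite.mpr hYinf (Finite.of_equiv _ Subgroup.topEquiv.toEquiv)
  set yG : G := (yH : G) with hyGdef
  have hYz : Y = zpowers yG := aux_eq_zpowers_coe yH hyH
  have hyGY : yG ∈ Y := yH.2
  -- Step 4: K = kernel of conjugation action on Y
  haveI : Finite (MulAut ↥Y) := aux_finite_mulAut ↥Y yH hyH hyford
  set K : Subgroup G := (MulAut.conjNormal (H := Y)).ker with hKdef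
  have hKfi : K.index ≠ 0 := by
    rw [hKdef, Subgroup.index_ker]
    have : Nonempty (MulAut.conjNormal (H := Y)).range := ⟨1, 1, map_one _⟩
    exact Nat.card_pos.ne'
  have hKcomm : ∀ g ∈ K, ∀ x ∈ Y, g * x * g⁻¹ = x := by
    intro g hg x hx
    have h1 : MulAut.conjNormal (H := Y) g = 1 := hg
    have h2 : (MulAut.conjNormal (H := Y) g) ⟨x, hx⟩ = ⟨x, hx⟩ := by rw [h1]; rfl
    have h3 := congrArg (Subtype.val) h2
    simpa [MulAut.conjNormal_apply] using h3
  -- Step 5: the quotient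
  set π : G →* G ⧸ V₁ := QuotientGroup.mk' V₁ with hπdef
  have hπsurj : Function.Surjective π := QuotientGroup.mk'_surjective V₁
  obtain ⟨w, hwford, hwfi⟩ := aux_exists_gen (G ⧸ V₁) h₂
  set K' : Subgroup (G ⧸ V₁) := K.map π with hK'def
  have hK'fi : K'.index ≠ 0 := by
    have h1 : K'.index = (K'.comap π).index :=
      (Subgroup.index_comap_of_surjective _ hπsurj).symm
    rw [h1, hK'def, comap_map_eq]
    intro h0
    exact hKfi (Nat.eq_zero_of_zero_dvd (h0 ▸ Subgroup.index_dvd_of_le le_sup_left))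
  haveI : K'.FiniteIndex := ⟨hK'fi⟩
  haveI hwinf : Infinite ↥(zpowers w) := aux_infinite_zpowers hwford
  haveI : Infinite ↥(K'.subgroupOf (zpowers w)) := by
    rw [← not_finite_iff_infinite]
    intro hfin
    exact not_finite_iff_infinite.mpr hwinf
      (aux_finite_of_finiteIndex _ (Subgroup.FiniteIndex.index_ne_zero
        (H := K'.subgroupOf (zpowers w))) hfin)
  obtain ⟨u, hu⟩ := exists_ne (1 : ↥(K'.subgroupOf (zpowers w)))
  set q : G ⧸ V₁ := ((u : ↥(zpowers w)) : G ⧸ V₁) with hqdef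
  have hqK' : q ∈ K' := u.2
  have hqzw : q ∈ zpowers w := (u : ↥(zpowers w)).2
  have hq1 : q ≠ 1 := by
    intro h
    apply hu
    rw [Subtype.ext_iff, Subtype.ext_iff]
    exact h
  obtain ⟨nI, hn⟩ := mem_zpowers_iff.mp hqzw
  have hn0 : nI ≠ 0 := fun h => hq1 (by rw [← hn, h, zpow_zero])
  have hwinj := injective_zpow_iff_not_isOfFinOrder.mpr hwford
  have hqford : ¬ IsOfFinOrder q := by
    rw [← injective_zpow_iff_not_isOfFinOrder]
    intro a b hab
    simp only at hab
    have : w ^ (nI * a) = w ^ (nI * b) := by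
      rw [zpow_mul, zpow_mul, hn]; exact hab
    exact mul_left_cancel₀ hn0 (hwinj this)
  have hqinj := injective_zpow_iff_not_isOfFinOrder.mpr hqford
  have hqrel : (zpowers q).relIndex (zpowers w) ≠ 0 := by
    have hzq : zpowers q = zpowers (w ^ (nI.natAbs : ℕ)) := by
      rw [← hn]
      rcases Int.natAbs_eq nI with h | h
      · conv_lhs => rw [h]
        rw [zpow_natCast]
      · conv_lhs => rw [h]
        rw [zpow_neg, zpow_natCast, zpowers_inv]
    rw [hzq]
    exact aux_relindex_pow w nI.natAbs (Int.natAbs_ne_zero.mpr hn0)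
  have hqidx : (zpowers q).index ≠ 0 := by
    rw [← Subgroup.relIndex_mul_index (zpowers_le.mpr hqzw)]
    exact mul_ne_zero hqrel hwfi.index_ne_zero
  set P : Subgroup G := (zpowers q).comap π with hPdef
  have hPfi : P.index ≠ 0 := by
    rw [hPdef, Subgroup.index_comap_of_surjective _ hπsurj]
    exact hqidx
  have hV₁P : V₁ ≤ P := by
    intro x hx
    rw [hPdef, mem_comap]
    have : π x = 1 := (QuotientGroup.eq_one_iff x).mpr hx
    rw [this]; exact one_mem _
  obtain ⟨s, hsK, hsq⟩ := hqK'
  have hyGV₁ : yG ∈ V₁ := hYV₁ hyGY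
  have hπyG : π yG = 1 := (QuotientGroup.eq_one_iff yG).mpr hyGV₁
  have hcomm : Commute s yG := by
    have h := hKcomm s hsK yG hyGY
    exact mul_inv_eq_iff_eq_mul.mp h
  -- Step 6: the free abelian subgroup
  set f : Multiplicative (ℤ × ℤ) →* G := MonoidHom.mk'
    (fun p => yG ^ (p.toAdd.1) * s ^ (p.toAdd.2))
    (by
      intro a b
      show yG ^ (a.toAdd.1 + b.toAdd.1) * s ^ (a.toAdd.2 + b.toAdd.2) = _
      show yG ^ (a.toAdd.1 + b.toAdd.1) * s ^ (a.toAdd.2 + b.toAdd.2)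
        = (yG ^ (a.toAdd.1) * s ^ (a.toAdd.2)) * (yG ^ (b.toAdd.1) * s ^ (b.toAdd.2))
      rw [zpow_add, zpow_add]
      exact (hcomm.symm.zpow_zpow b.toAdd.1 a.toAdd.2).mul_mul_mul_comm _ _) with hfdef
  have hyGford : ¬ IsOfFinOrder yG := fun h => hyford ((aux_ford_coe yH).mp h)
  have hyGinj := injective_zpow_iff_not_isOfFinOrder.mpr hyGford
  have hfapp : ∀ p : ℤ × ℤ, f (Multiplicative.ofAdd p) = yG ^ p.1 * s ^ p.2 := fun p => rfl
  have hfinj : Function.Injective f := by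
    rw [injective_iff_map_eq_one]
    intro p hp
    have hp' : yG ^ (p.toAdd.1) * s ^ (p.toAdd.2) = 1 := hp
    have hπp : (π yG) ^ (p.toAdd.1) * (π s) ^ (p.toAdd.2) = 1 := by
      rw [← map_zpow, ← map_zpow, ← map_mul, hp', map_one]
    rw [hπyG, one_zpow, one_mul, hsq] at hπp
    have h2 : p.toAdd.2 = 0 := hqinj (show q ^ (p.toAdd.2) = q ^ (0 : ℤ) by
      rw [hπp, zpow_zero])
    rw [h2, zpow_zero, mul_one] at hp'
    have h1 : p.toAdd.1 = 0 := hyGinj (show yG ^ (p.toAdd.1) = yG ^ (0 : ℤ) by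
      rw [hp', zpow_zero])
    have : p.toAdd = (0, 0) := Prod.ext h1 h2
    rw [← ofAdd_toAdd p, this]
    rfl
  set A : Subgroup G := f.range with hAdef
  have eA : Multiplicative (ℤ × ℤ) ≃* ↥A := MonoidHom.ofInjective hfinj
  have hsA : s ∈ A := ⟨Multiplicative.ofAdd (0, 1), by rw [hfapp]; simp⟩
  have hyGA : yG ∈ A := ⟨Multiplicative.ofAdd (1, 0), by rw [hfapp]; simp⟩
  have hAP : A ≤ P := by
    rintro x ⟨p, rfl⟩
    rw [hPdef, mem_comap]
    show π (yG ^ (p.toAdd.1) * s ^ (p.toAdd.2)) ∈ zpowers q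
    rw [map_mul, map_zpow, map_zpow, hπyG, one_zpow, one_mul, hsq]
    exact zpow_mem_zpowers q _
  have hz₀A : z₀ ∈ A := by
    have : zpowers yG ≤ A := zpowers_le.mpr hyGA
    exact this (hYz ▸ hz₀Y)
  -- finite index of A
  have hWrel : (zpowers z₀).relIndex V₁ ≠ 0 := by
    rw [← Subgroup.relIndex_mul_relIndex (zpowers z₀) (zpowers z) V₁
      (zpowers_le.mpr (hz₀def ▸ npow_mem_zpowers z e)) (zpowers_le.mpr hzV₁)]
    exact mul_ne_zero (hz₀def ▸ aux_relindex_pow z e he0) hZrel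
  haveI : ((zpowers z₀).subgroupOf V₁).FiniteIndex := ⟨hWrel⟩
  have hfinq : Finite (↥P ⧸ A.subgroupOf P) := by
    haveI hfq : Finite (Quotient (QuotientGroup.leftRel ((zpowers z₀).subgroupOf V₁))) :=
      inferInstanceAs (Finite (↥V₁ ⧸ (zpowers z₀).subgroupOf V₁))
    have hcompat : ∀ a b : ↥V₁,
        (QuotientGroup.leftRel ((zpowers z₀).subgroupOf V₁)) a b →
        (QuotientGroup.mk ⟨(a : G), hV₁P a.2⟩ : ↥P ⧸ A.subgroupOf P)
          = QuotientGroup.mk ⟨(b : G), hV₁P b.2⟩ := by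
      intro a b hab
      have hab' : a⁻¹ * b ∈ (zpowers z₀).subgroupOf V₁ :=
        QuotientGroup.leftRel_apply.mp hab
      rw [mem_subgroupOf] at hab'
      have habA : ((a : G))⁻¹ * (b : G) ∈ A := by
        have h1 : ((a⁻¹ * b : ↥V₁) : G) = ((a : G))⁻¹ * (b : G) := rfl
        rw [h1] at hab'
        exact zpowers_le.mpr hz₀A hab'
      refine QuotientGroup.eq.mpr ?_
      rw [mem_subgroupOf]
      exact habA
    refine Finite.of_surjective
      (Quotient.lift (fun v : ↥V₁ =>
        (QuotientGroup.mk ⟨(v : G), hV₁P v.2⟩ : ↥P ⧸ A.subgroupOf P)) hcompat) ?_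
    intro x
    induction x using QuotientGroup.induction_on with
    | H p =>
      obtain ⟨k, hk⟩ := mem_zpowers_iff.mp (mem_comap.mp p.2)
      have hπv : π ((p : G) * (s ^ k)⁻¹) = 1 := by
        rw [map_mul, map_inv, map_zpow, hsq, ← hk, mul_inv_cancel]
      have hvV₁ : (p : G) * (s ^ k)⁻¹ ∈ V₁ := (QuotientGroup.eq_one_iff _).mp hπv
      refine ⟨QuotientGroup.mk (⟨(p : G) * (s ^ k)⁻¹, hvV₁⟩ : ↥V₁), ?_⟩
      show (QuotientGroup.mk ⟨((p : G) * (s ^ k)⁻¹ : G), _⟩ : ↥P ⧸ A.subgroupOf P)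
        = QuotientGroup.mk p
      refine QuotientGroup.eq.mpr ?_
      rw [mem_subgroupOf]
      show (((p : G) * (s ^ k)⁻¹)⁻¹ * (p : G)) ∈ A
      have hcalc : ((p : G) * (s ^ k)⁻¹)⁻¹ * (p : G) = s ^ k := by group
      rw [hcalc]
      exact A.zpow_mem hsA k
  have hArelP : A.relIndex P ≠ 0 := by
    have := @Subgroup.index_ne_zero_of_finite _ _ (A.subgroupOf P) hfinq
    exact this
  have hAidx : A.index ≠ 0 := by
    rw [← Subgroup.relIndex_mul_index hAP]
    exact mul_ne_zero hArelP hPfi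
  haveI : A.FiniteIndex := ⟨hAidx⟩
  refine ⟨A.normalCore, inferInstance, inferInstance, ?_⟩
  exact aux_transfer A A.normalCore (normalCore_le A) eA
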